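/- For any integer r ≥ 2, any function f : {0,1,…,r−1}ⁿ → ℝ and any k = 1,…,n, one has Σ_{S : |S| = k} |f̂(S)|² ≤ C_r^{2k} · ‖f‖_{4/3}², where C_r = (9/2)·r³. -/

import Mathlib

open scoped Classical
open Finset

/-- Probability of an event under the uniform distribution on `{0,1,…,r-1}ⁿ`. -/
noncomputable def prr {n r : ℕ} (P : (Fin n → Fin r) → Prop) : ℝ :=
  ((Finset.univ.filter P).card : ℝ) / r ^ n

/-- Expectation of `g(X)` for `X` uniform on `{0,1,…,r-1}ⁿ`. -/
noncomputable def expecr {n r : ℕ} (g : (Fin n → Fin r) → ℝ) : ℝ :=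
  (∑ x, g x) / r ^ n

/-- Variance of `g(X)` for `X` uniform on `{0,1,…,r-1}ⁿ`. -/
noncomputable def varr {n r : ℕ} (g : (Fin n → Fin r) → ℝ) : ℝ :=
  expecr fun x => (g x - expecr g) ^ 2

/-- The `α`-quantile of `f(X)`. -/
noncomputable def quantr {n r : ℕ} (f : (Fin n → Fin r) → ℝ) (α : ℝ) : ℝ :=
  sInf {z : ℝ | α ≤ prr fun x => f x ≤ z}

/-- `Δᵢ f(x) = f(x) - (1/r) ∑_{j=0}^{r-1} f(x_{i,j})` where `x_{i,j}` replaces the `i`-th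
coordinate of `x` by `x_i ⊕ j` (addition modulo `r`). -/
noncomputable def Δi {n r : ℕ} (f : (Fin n → Fin r) → ℝ) (i : Fin n)
    (x : Fin n → Fin r) : ℝ :=
  f x - (1 / r) * ∑ j : Fin r, f (Function.update x i (x i + j))

/-- `ω = e^{2πi/r}`. -/
noncomputable def omg (r : ℕ) : ℂ := Complex.exp (2 * Real.pi * Complex.I / r)

/-- The character `u_S(x) = ω^{⟨S,x⟩}` with `⟨S,x⟩ = ∑ᵢ Sᵢxᵢ mod r`. -/
noncomputable def uS {n r : ℕ} (S x : Fin n → Fin r) : ℂ :=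
  omg r ^ ((∑ i, (S i).val * (x i).val) % r)

/-- `∫ g = r^{-n} ∑_x g(x)`. -/
noncomputable def intg {n r : ℕ} (g : (Fin n → Fin r) → ℂ) : ℂ :=
  (∑ x, g x) / r ^ n

/-- Fourier coefficient `ĝ(S) = ∫ g ⋅ conj(u_S)`. -/
noncomputable def fhat {n r : ℕ} (g : (Fin n → Fin r) → ℂ) (S : Fin n → Fin r) : ℂ :=
  intg fun x => g x * (starRingEnd ℂ) (uS S x)

/-- `‖g‖_q = (∫ |g|^q)^{1/q}`. -/
noncomputable def Lnorm {n r : ℕ} (q : ℝ) (g : (Fin n → Fin r) → ℂ) : ℝ :=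
  ((∑ x, ‖g x‖ ^ q) / r ^ n) ^ (1 / q)

/-- `|S|`: the number of nonzero components of `S`. -/
noncomputable def suppCard {n r : ℕ} [NeZero r] (S : Fin n → Fin r) : ℕ :=
  (Finset.univ.filter fun i => S i ≠ 0).card


-- ==== auxiliary development ====

set_option linter.unusedSectionVars false

section found
variable {r : ℕ} [NeZero r]

lemma omg_ne_zero : omg r ≠ 0 := Complex.exp_ne_zero _

lemma omg_prim : IsPrimitiveRoot (omg r) r := by
  have := Complex.isPrimitiveRoot_exp r (NeZero.ne r)
  simpa [omg, mul_comm, mul_div_assoc] using this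

lemma omg_pow_r : omg r ^ r = 1 := omg_prim.pow_eq_one

lemma conj_omg_pow (m : ℕ) : (starRingEnd ℂ) (omg r ^ m) = (omg r)⁻¹ ^ m := by
  rw [map_pow]
  congr 1
  rw [omg, ← Complex.exp_conj, ← Complex.exp_neg]
  congr 1
  have : ((r : ℂ)) = (starRingEnd ℂ) (r : ℂ) := by simp
  rw [map_div₀]
  simp [Complex.conj_I, map_ofNat]
  ring

lemma orth1 (s t : Fin r) :
    ∑ j : Fin r, omg r ^ (s.val * j.val) * (starRingEnd ℂ) (omg r ^ (t.val * j.val)) =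
      if s = t then (r : ℂ) else 0 := by
  have hterm : ∀ j : Fin r,
      omg r ^ (s.val * j.val) * (starRingEnd ℂ) (omg r ^ (t.val * j.val)) =
        (omg r ^ s.val * (omg r)⁻¹ ^ t.val) ^ j.val := by
    intro j
    rw [conj_omg_pow, mul_pow, ← pow_mul, ← pow_mul]
  simp only [hterm]
  set μ : ℂ := omg r ^ s.val * (omg r)⁻¹ ^ t.val with hμ
  rw [Fin.sum_univ_eq_sum_range (fun i => μ ^ i) r]
  by_cases hst : s = t
  · subst hst
    have : μ = 1 := by
      rw [hμ, inv_pow, mul_inv_eq_one₀ (pow_ne_zero _ omg_ne_zero)]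
    simp [this]
  · rw [if_neg hst]
    have hμ1 : μ ≠ 1 := by
      intro h
      rw [hμ, inv_pow, mul_inv_eq_one₀ (pow_ne_zero _ omg_ne_zero)] at h
      exact hst (Fin.ext (omg_prim.pow_inj s.isLt t.isLt h))
    have hμr : μ ^ r = 1 := by
      rw [hμ, mul_pow, ← pow_mul, ← pow_mul, mul_comm s.val r, mul_comm t.val r,
        pow_mul, pow_mul, omg_pow_r, inv_pow, omg_pow_r]
      simp
    have := geom_sum_mul μ r
    rw [hμr, sub_self] at this
    rcases mul_eq_zero.mp this with h | h
    · exact h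
    · exact absurd (sub_eq_zero.mp h) hμ1

lemma orth0 (b : Fin r) :
    ∑ j : Fin r, omg r ^ (b.val * j.val) = if b = 0 then (r : ℂ) else 0 := by
  have := orth1 (r := r) b 0
  simpa using this
end found


section bsec
variable {r : ℕ} [NeZero r]

lemma uS_eq_prod {n : ℕ} (S x : Fin n → Fin r) :
    uS S x = ∏ i, omg r ^ ((S i).val * (x i).val) := by
  rw [uS, ← pow_eq_pow_mod _ omg_pow_r, ← Finset.prod_pow_eq_pow_sum]

lemma uS_cons {n : ℕ} (b : Fin r) (S' : Fin n → Fin r) (x0 : Fin r) (x' : Fin n → Fin r) :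
    uS (Fin.cons b S') (Fin.cons x0 x') = omg r ^ (b.val * x0.val) * uS S' x' := by
  rw [uS_eq_prod, uS_eq_prod, Fin.prod_univ_succ]
  simp

lemma orthn {n : ℕ} (S T : Fin n → Fin r) :
    ∑ x : Fin n → Fin r, uS S x * (starRingEnd ℂ) (uS T x) =
      if S = T then (r : ℂ) ^ n else 0 := by
  have : ∀ x : Fin n → Fin r, uS S x * (starRingEnd ℂ) (uS T x) =
      ∏ i, (omg r ^ ((S i).val * (x i).val) *
        (starRingEnd ℂ) (omg r ^ ((T i).val * (x i).val))) := by
    intro x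
    rw [uS_eq_prod, uS_eq_prod, map_prod, ← Finset.prod_mul_distrib]
  simp only [this]
  rw [← Fintype.prod_sum (κ := fun _ : Fin n => Fin r) (f := fun i j =>
    omg r ^ ((S i).val * j.val) * (starRingEnd ℂ) (omg r ^ ((T i).val * j.val)))]
  rw [show (∏ i, ∑ j : Fin r, omg r ^ ((S i).val * j.val) *
      (starRingEnd ℂ) (omg r ^ ((T i).val * j.val))) =
      ∏ i, (if S i = T i then (r:ℂ) else 0) from
    Finset.prod_congr rfl fun i _ => orth1 (S i) (T i)]
  by_cases h : S = T
  · subst h; simp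
  · rw [if_neg h]
    obtain ⟨i, hi⟩ := Function.ne_iff.mp h
    exact Finset.prod_eq_zero (Finset.mem_univ i) (if_neg hi)

end bsec

lemma sum_mul_conj_ortho {ι κ : Type*} [Fintype ι] [Fintype κ]
    (u : κ → ι → ℂ) (c d : κ → ℂ) (R : ℂ)
    (h : ∀ a b, ∑ j, u a j * (starRingEnd ℂ) (u b j) = if a = b then R else 0) :
    ∑ j, (∑ a, c a * u a j) * (starRingEnd ℂ) (∑ b, d b * u b j) =
      R * ∑ a, c a * (starRingEnd ℂ) (d a) := by
  calc ∑ j, (∑ a, c a * u a j) * (starRingEnd ℂ) (∑ b, d b * u b j)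
      = ∑ j, ∑ a, ∑ b, (c a * (starRingEnd ℂ) (d b)) * (u a j * (starRingEnd ℂ) (u b j)) := by
        refine Finset.sum_congr rfl fun j _ => ?_
        rw [map_sum, Finset.sum_mul_sum]
        refine Finset.sum_congr rfl fun a _ => Finset.sum_congr rfl fun b _ => ?_
        rw [map_mul]; ring
    _ = ∑ a, ∑ b, (c a * (starRingEnd ℂ) (d b)) * ∑ j, (u a j * (starRingEnd ℂ) (u b j)) := by
        rw [Finset.sum_comm]
        refine Finset.sum_congr rfl fun a _ => ?_
        rw [Finset.sum_comm]
        exact Finset.sum_congr rfl fun b _ => (Finset.mul_sum _ _ _).symm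
    _ = ∑ a, (c a * (starRingEnd ℂ) (d a)) * R := by
        refine Finset.sum_congr rfl fun a _ => ?_
        simp only [h, mul_ite, mul_zero]
        rw [Finset.sum_ite_eq univ a (fun b => c a * (starRingEnd ℂ) (d b) * R)]
        simp
    _ = R * ∑ a, c a * (starRingEnd ℂ) (d a) := by
        rw [Finset.mul_sum]
        exact Finset.sum_congr rfl fun a _ => by ring

lemma sum_sq_abs_ortho {ι κ : Type*} [Fintype ι] [Fintype κ]
    (u : κ → ι → ℂ) (c : κ → ℂ) (R : ℝ)
    (h : ∀ a b, ∑ j, u a j * (starRingEnd ℂ) (u b j) = if a = b then (R:ℂ) else 0) :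
    ∑ j, norm (∑ a, c a * u a j) ^ 2 = R * ∑ a, norm (c a) ^ 2 := by
  have key := sum_mul_conj_ortho u c c (R:ℂ) h
  have lhs : ∑ j, (∑ a, c a * u a j) * (starRingEnd ℂ) (∑ a, c a * u a j) =
      ((∑ j, norm (∑ a, c a * u a j) ^ 2 : ℝ) : ℂ) := by
    push_cast
    exact Finset.sum_congr rfl fun j _ => by
      rw [Complex.mul_conj]; exact_mod_cast (Complex.sq_norm _).symm
  have rhs : (R:ℂ) * ∑ a, c a * (starRingEnd ℂ) (c a) =
      ((R * ∑ a, norm (c a) ^ 2 : ℝ) : ℂ) := by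
    push_cast
    congr 1
    exact Finset.sum_congr rfl fun a _ => by
      rw [Complex.mul_conj]; exact_mod_cast (Complex.sq_norm _).symm
  rw [lhs, rhs] at key
  exact_mod_cast key


-- Σ a_i^2 ≤ (Σ a_i)^2 for nonneg
lemma sum_sq_le_sq_sum {ι : Type*} (s : Finset ι) (f : ι → ℝ) (hf : ∀ i ∈ s, 0 ≤ f i) :
    ∑ i ∈ s, f i ^ 2 ≤ (∑ i ∈ s, f i) ^ 2 := by
  rw [sq (∑ i ∈ s, f i)]
  calc ∑ i ∈ s, f i ^ 2 ≤ ∑ i ∈ s, f i * ∑ j ∈ s, f j := by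
        refine Finset.sum_le_sum fun i hi => ?_
        rw [sq]
        exact mul_le_mul_of_nonneg_left (Finset.single_le_sum hf hi) (hf i hi)
    _ = (∑ i ∈ s, f i) * ∑ j ∈ s, f j := by rw [← Finset.sum_mul]

-- Cauchy-Schwarz, unsquared, for nonneg functions
lemma cs_sqrt {ι : Type*} (s : Finset ι) (f g : ι → ℝ) (hf : ∀ i ∈ s, 0 ≤ f i)
    (hg : ∀ i ∈ s, 0 ≤ g i) :
    ∑ i ∈ s, f i * g i ≤ Real.sqrt ((∑ i ∈ s, f i ^ 2) * (∑ i ∈ s, g i ^ 2)) := by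
  have h1 : (∑ i ∈ s, f i * g i) ^ 2 ≤ (∑ i ∈ s, f i ^ 2) * (∑ i ∈ s, g i ^ 2) :=
    Finset.sum_mul_sq_le_sq_mul_sq s f g
  have h0 : 0 ≤ ∑ i ∈ s, f i * g i :=
    Finset.sum_nonneg fun i hi => mul_nonneg (hf i hi) (hg i hi)
  exact Real.le_sqrt_of_sq_le h1

lemma cube_bound {ι : Type*} [Fintype ι] (D : ι → ℂ) :
    ∑ j, norm (D j) ^ 3 ≤
      (∑ j, norm (D j) ^ 2) * Real.sqrt (∑ j, norm (D j) ^ 2) := by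
  have h1 : ∑ j, norm (D j) ^ 3 ≤
      Real.sqrt ((∑ j, (norm (D j)) ^ 2) * (∑ j, ((norm (D j))^2) ^ 2)) := by
    have := cs_sqrt Finset.univ (fun j => norm (D j)) (fun j => norm (D j) ^ 2)
      (fun j _ => norm_nonneg _) (fun j _ => sq_nonneg _)
    calc ∑ j, norm (D j) ^ 3 = ∑ j, norm (D j) * norm (D j) ^ 2 :=
          Finset.sum_congr rfl fun j _ => by ring
      _ ≤ _ := by simpa using this
  refine h1.trans ?_
  have h2 : ∑ j, ((norm (D j))^2) ^ 2 ≤ (∑ j, norm (D j) ^ 2) ^ 2 :=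
    sum_sq_le_sq_sum _ _ (fun i _ => sq_nonneg _)
  calc Real.sqrt ((∑ j, (norm (D j)) ^ 2) * (∑ j, ((norm (D j))^2) ^ 2))
      ≤ Real.sqrt ((∑ j, (norm (D j)) ^ 2) * (∑ j, (norm (D j)) ^ 2) ^ 2) := by
        apply Real.sqrt_le_sqrt
        exact mul_le_mul_of_nonneg_left h2 (Finset.sum_nonneg fun i _ => sq_nonneg _)
    _ = _ := by
        rw [mul_comm, Real.sqrt_mul (sq_nonneg _), Real.sqrt_sq
          (Finset.sum_nonneg fun i _ => sq_nonneg _), mul_comm]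

lemma pow4_bound {ι : Type*} [Fintype ι] (D : ι → ℂ) :
    ∑ j, norm (D j) ^ 4 ≤ (∑ j, norm (D j) ^ 2) ^ 2 := by
  have := sum_sq_le_sq_sum Finset.univ (fun j => norm (D j) ^ 2) (fun i _ => sq_nonneg _)
  calc ∑ j, norm (D j) ^ 4 = ∑ j, (norm (D j) ^ 2) ^ 2 :=
        Finset.sum_congr rfl fun j _ => by ring
    _ ≤ _ := this

lemma quart {r : ℕ} (g : ℂ) (D : Fin r → ℂ) (hD : ∑ j, D j = 0) :
    ∑ j, norm (g + D j) ^ 4 ≤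
      (r : ℝ) * norm g ^ 4 + 6 * norm g ^ 2 * (∑ j, norm (D j) ^ 2) +
        4 * norm g * (∑ j, norm (D j) ^ 3) + ∑ j, norm (D j) ^ 4 := by
  have key : ∀ j, norm (g + D j) ^ 4 =
      norm g ^ 4 + norm (D j) ^ 4 + 4 * ((g * (starRingEnd ℂ) (D j)).re) ^ 2 +
        4 * norm g ^ 2 * (g * (starRingEnd ℂ) (D j)).re +
        2 * norm g ^ 2 * norm (D j) ^ 2 +
        4 * (g * (starRingEnd ℂ) (D j)).re * norm (D j) ^ 2 := by
    intro j
    have h4 : norm (g + D j) ^ 4 = (Complex.normSq (g + D j)) ^ 2 := by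
      rw [show (4:ℕ) = 2 * 2 from rfl, pow_mul, Complex.sq_norm]
    rw [h4, Complex.normSq_add]
    have e1 : norm g ^ 4 = Complex.normSq g ^ 2 := by
      rw [show (4:ℕ) = 2 * 2 from rfl, pow_mul, Complex.sq_norm]
    have e2 : norm (D j) ^ 4 = Complex.normSq (D j) ^ 2 := by
      rw [show (4:ℕ) = 2 * 2 from rfl, pow_mul, Complex.sq_norm]
    have e3 : norm g ^ 2 = Complex.normSq g := Complex.sq_norm g
    have e4 : norm (D j) ^ 2 = Complex.normSq (D j) := Complex.sq_norm (D j)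
    rw [e1, e2, e3, e4]; ring
  have habs : ∀ j, |(g * (starRingEnd ℂ) (D j)).re| ≤ norm g * norm (D j) := by
    intro j
    calc |(g * (starRingEnd ℂ) (D j)).re| ≤ norm (g * (starRingEnd ℂ) (D j)) :=
          Complex.abs_re_le_norm _
      _ = norm g * norm (D j) := by rw [norm_mul, Complex.norm_conj]
  have hzero : ∑ j, (g * (starRingEnd ℂ) (D j)).re = 0 := by
    have : ∑ j, g * (starRingEnd ℂ) (D j) = 0 := by
      rw [← Finset.mul_sum, ← map_sum, hD]; simp
    rw [← Complex.re_sum, this]; rfl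
  calc ∑ j, norm (g + D j) ^ 4
      = ∑ j, (norm g ^ 4 + norm (D j) ^ 4 +
          4 * ((g * (starRingEnd ℂ) (D j)).re) ^ 2 +
          4 * norm g ^ 2 * (g * (starRingEnd ℂ) (D j)).re +
          2 * norm g ^ 2 * norm (D j) ^ 2 +
          4 * (g * (starRingEnd ℂ) (D j)).re * norm (D j) ^ 2) :=
        Finset.sum_congr rfl fun j _ => key j
    _ ≤ _ := by
        rw [Finset.sum_add_distrib, Finset.sum_add_distrib, Finset.sum_add_distrib,
          Finset.sum_add_distrib, Finset.sum_add_distrib]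
        have t1 : ∑ _j : Fin r, norm g ^ 4 = (r:ℝ) * norm g ^ 4 := by
          rw [Finset.sum_const]; simp [mul_comm]
        have t3 : ∑ j, 4 * ((g * (starRingEnd ℂ) (D j)).re) ^ 2 ≤
            ∑ j, 4 * (norm g ^ 2 * norm (D j) ^ 2) := by
          refine Finset.sum_le_sum fun j _ => ?_
          have := habs j
          have h2 : ((g * (starRingEnd ℂ) (D j)).re) ^ 2 ≤
              (norm g * norm (D j)) ^ 2 := by
            rw [← sq_abs ((g * (starRingEnd ℂ) (D j)).re)]
            exact pow_le_pow_left₀ (abs_nonneg _) this 2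
          nlinarith
        have t4 : ∑ j, 4 * norm g ^ 2 * (g * (starRingEnd ℂ) (D j)).re = 0 := by
          rw [← Finset.mul_sum, hzero, mul_zero]
        have t6 : ∑ j, 4 * (g * (starRingEnd ℂ) (D j)).re * norm (D j) ^ 2 ≤
            ∑ j, 4 * norm g * norm (D j) ^ 3 := by
          refine Finset.sum_le_sum fun j _ => ?_
          have h1 : (g * (starRingEnd ℂ) (D j)).re ≤ norm g * norm (D j) :=
            (le_abs_self _).trans (habs j)
          have h2 : (g * (starRingEnd ℂ) (D j)).re * norm (D j) ^ 2 ≤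
              norm g * norm (D j) * norm (D j) ^ 2 :=
            mul_le_mul_of_nonneg_right h1 (sq_nonneg _)
          nlinarith
        have e2 : ∑ j, 2 * norm g ^ 2 * norm (D j) ^ 2 =
            2 * norm g ^ 2 * ∑ j, norm (D j) ^ 2 := by rw [Finset.mul_sum]
        have e3 : ∑ j, 4 * (norm g ^ 2 * norm (D j) ^ 2) =
            4 * norm g ^ 2 * ∑ j, norm (D j) ^ 2 := by
          rw [Finset.mul_sum]; exact Finset.sum_congr rfl fun j _ => by ring
        have e4 : ∑ j, 4 * norm g * norm (D j) ^ 3 =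
            4 * norm g * ∑ j, norm (D j) ^ 3 := by rw [Finset.mul_sum]
        rw [t1, t4, e2]
        have := t3.trans_eq e3
        have h6 := t6.trans_eq e4
        nlinarith [Finset.sum_nonneg (fun j (_ : j ∈ Finset.univ) =>
          sq_nonneg (norm (D j)))]


noncomputable def Fc {r n : ℕ} (a : (Fin n → Fin r) → ℂ) (x : Fin n → Fin r) : ℂ :=
  ∑ S, a S * uS S x

section core
variable {r : ℕ} [NeZero r]

lemma uS_zero {n : ℕ} (x : Fin n → Fin r) : uS (0 : Fin n → Fin r) x = 1 := by
  unfold uS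
  have : (∑ i, ((0 : Fin n → Fin r) i).val * (x i).val) = 0 := by
    simp
  rw [this]
  simp

lemma suppCard_eq_zero {n : ℕ} {S : Fin n → Fin r} (h : suppCard S = 0) : S = 0 := by
  unfold suppCard at h
  rw [Finset.card_eq_zero, Finset.filter_eq_empty_iff] at h
  funext i
  have := h (Finset.mem_univ i)
  simpa using this

lemma suppCard_cons {n : ℕ} (b : Fin r) (S' : Fin n → Fin r) :
    suppCard (Fin.cons b S') = (if b = 0 then 0 else 1) + suppCard S' := by
  unfold suppCard
  rw [Finset.card_filter, Finset.card_filter, Fin.sum_univ_succ]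
  simp [Fin.cons_zero, Fin.cons_succ]

lemma Fc_const {n : ℕ} (a : (Fin n → Fin r) → ℂ) (h : ∀ S, a S ≠ 0 → S = 0)
    (x : Fin n → Fin r) : Fc a x = a 0 := by
  unfold Fc
  rw [Finset.sum_eq_single 0]
  · rw [uS_zero, mul_one]
  · intro S _ hS
    by_cases h' : a S = 0
    · rw [h', zero_mul]
    · exact absurd (h S h') hS
  · simp

lemma card_E (n : ℕ) : (Fintype.card (Fin n → Fin r) : ℝ) = (r : ℝ) ^ n := by
  simp [Fintype.card_fun]

lemma hc0 {n k : ℕ} (a : (Fin n → Fin r) → ℂ) (ha : ∀ S, a S ≠ 0 → suppCard S = 0) :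
    (r:ℝ)^n * ∑ x, norm (Fc a x)^4 ≤
      (16 * (r:ℝ)^2)^k * (∑ x, norm (Fc a x)^2)^2 := by
  have hconst : ∀ x, Fc a x = a 0 := Fc_const a fun S hS => suppCard_eq_zero (ha S hS)
  have h4 : ∑ x, norm (Fc a x)^4 = (r:ℝ)^n * norm (a 0)^4 := by
    rw [Finset.sum_congr rfl fun x _ => by rw [hconst x]]
    rw [Finset.sum_const, Finset.card_univ, nsmul_eq_mul, card_E]
  have h2 : ∑ x, norm (Fc a x)^2 = (r:ℝ)^n * norm (a 0)^2 := by
    rw [Finset.sum_congr rfl fun x _ => by rw [hconst x]]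
    rw [Finset.sum_const, Finset.card_univ, nsmul_eq_mul, card_E]
  rw [h4, h2]
  have h1 : (1:ℝ) ≤ (16 * (r:ℝ)^2)^k := by
    apply one_le_pow₀
    have : (1:ℝ) ≤ (r:ℝ) := by exact_mod_cast Nat.one_le_iff_ne_zero.mpr (NeZero.ne r)
    nlinarith
  have hrn : (0:ℝ) ≤ (r:ℝ)^n := by positivity
  nlinarith [sq_nonneg ((r:ℝ)^n * norm (a 0)^2), pow_nonneg (norm_nonneg (a 0)) 4]

lemma hc_base {k : ℕ} (a : (Fin 0 → Fin r) → ℂ) :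
    (r:ℝ)^0 * ∑ x, norm (Fc a x)^4 ≤
      (16 * (r:ℝ)^2)^k * (∑ x, norm (Fc a x)^2)^2 := by
  rw [Fintype.sum_unique, Fintype.sum_unique, pow_zero, one_mul]
  have h1 : (1:ℝ) ≤ (16 * (r:ℝ)^2)^k := by
    apply one_le_pow₀
    have : (1:ℝ) ≤ (r:ℝ) := by exact_mod_cast Nat.one_le_iff_ne_zero.mpr (NeZero.ne r)
    nlinarith
  have h := norm_nonneg (Fc a default)
  nlinarith [pow_nonneg h 4, pow_nonneg h 2]
end core


noncomputable def slc {r n : ℕ} (a : (Fin (n+1) → Fin r) → ℂ) (b : Fin r) :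
    (Fin n → Fin r) → ℂ := fun S' => a (Fin.cons b S')

noncomputable def slcz {r n : ℕ} [NeZero r] (a : (Fin (n+1) → Fin r) → ℂ) (b : Fin r) :
    (Fin n → Fin r) → ℂ := fun S' => if b = 0 then 0 else a (Fin.cons b S')

noncomputable def Dpart {r n : ℕ} [NeZero r] (a : (Fin (n+1) → Fin r) → ℂ)
    (x0 : Fin r) (x' : Fin n → Fin r) : ℂ :=
  ∑ b, Fc (slcz a b) x' * omg r ^ (b.val * x0.val)


section keys
variable {r : ℕ} [NeZero r]

lemma Fc_apply {n : ℕ} (a : (Fin n → Fin r) → ℂ) (x : Fin n → Fin r) :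
    Fc a x = ∑ S, a S * uS S x := rfl

lemma sumsplit {n : ℕ} {M : Type*} [AddCommMonoid M] (G : (Fin (n+1) → Fin r) → M) :
    ∑ x, G x = ∑ x' : Fin n → Fin r, ∑ x0 : Fin r, G (Fin.cons x0 x') := by
  rw [← (Fin.consEquiv (fun _ => Fin r)).sum_comp G, Fintype.sum_prod_type, Finset.sum_comm]
  rfl

lemma slicez_eq {n : ℕ} (a : (Fin (n+1) → Fin r) → ℂ) (b : Fin r) (x' : Fin n → Fin r) :
    Fc (slcz a b) x' = if b = 0 then 0 else Fc (slc a b) x' := by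
  by_cases hb : b = 0
  · subst hb; simp [Fc_apply, slcz]
  · simp only [Fc_apply, slcz, slc, if_neg hb]

lemma key1 {n : ℕ} (a : (Fin (n+1) → Fin r) → ℂ) (x0 : Fin r) (x' : Fin n → Fin r) :
    Fc a (Fin.cons x0 x') = ∑ b, Fc (slc a b) x' * omg r ^ (b.val * x0.val) := by
  have h := (Fin.consEquiv (fun _ : Fin (n+1) => Fin r)).sum_comp
    (fun S => a S * uS S (Fin.cons x0 x'))
  rw [Fc_apply, ← h, Fintype.sum_prod_type]
  refine Finset.sum_congr rfl fun b _ => ?_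
  show ∑ S' : Fin n → Fin r, a (Fin.cons b S') * uS (Fin.cons b S') (Fin.cons x0 x') = _
  rw [Fc_apply, Finset.sum_mul]
  refine Finset.sum_congr rfl fun S' _ => ?_
  rw [uS_cons]
  show a (Fin.cons b S') * (omg r ^ (b.val * x0.val) * uS S' x') =
    a (Fin.cons b S') * uS S' x' * omg r ^ (b.val * x0.val)
  ring

lemma key2 {n : ℕ} (a : (Fin (n+1) → Fin r) → ℂ) (x0 : Fin r) (x' : Fin n → Fin r) :
    Fc a (Fin.cons x0 x') = Fc (slc a 0) x' + Dpart a x0 x' := by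
  rw [key1, Dpart]
  have hpt : ∀ b : Fin r, Fc (slc a b) x' * omg r ^ (b.val * x0.val) =
      (if b = 0 then Fc (slc a 0) x' else 0) +
        Fc (slcz a b) x' * omg r ^ (b.val * x0.val) := by
    intro b
    rw [slicez_eq]
    by_cases hb : b = 0
    · subst hb; simp
    · simp [hb]
  rw [Finset.sum_congr rfl fun b _ => hpt b, Finset.sum_add_distrib,
    Finset.sum_ite_eq' Finset.univ (0 : Fin r) (fun _ => Fc (slc a 0) x')]
  simp

lemma key3 {n : ℕ} (a : (Fin (n+1) → Fin r) → ℂ) (x' : Fin n → Fin r) :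
    ∑ x0, Dpart a x0 x' = 0 := by
  unfold Dpart
  rw [Finset.sum_comm]
  have hpt : ∀ b : Fin r, ∑ x0 : Fin r, Fc (slcz a b) x' * omg r ^ (b.val * x0.val) =
      Fc (slcz a b) x' * (if b = 0 then (r:ℂ) else 0) := by
    intro b
    rw [← Finset.mul_sum, orth0]
  rw [Finset.sum_congr rfl fun b _ => hpt b]
  rw [Finset.sum_eq_single 0]
  · rw [slicez_eq]; simp
  · intro b _ hb; simp [hb]
  · simp

lemma key4 {n : ℕ} (a : (Fin (n+1) → Fin r) → ℂ) (x' : Fin n → Fin r) :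
    ∑ x0, norm (Dpart a x0 x')^2 =
      (r:ℝ) * ∑ b, norm (Fc (slcz a b) x')^2 := by
  exact sum_sq_abs_ortho (fun (b x0 : Fin r) => omg r ^ (b.val * x0.val))
    (fun b => Fc (slcz a b) x') (r:ℝ) (fun sb tb => by simpa using orth1 sb tb)

lemma key5 {n : ℕ} (a : (Fin (n+1) → Fin r) → ℂ) (x' : Fin n → Fin r) :
    ∑ x0, norm (Fc a (Fin.cons x0 x'))^2 =
      (r:ℝ) * (norm (Fc (slc a 0) x')^2 +
        ∑ b, norm (Fc (slcz a b) x')^2) := by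
  have h5 := sum_sq_abs_ortho (fun (b x0 : Fin r) => omg r ^ (b.val * x0.val))
    (fun b => Fc (slc a b) x') (r:ℝ) (fun sb tb => by simpa using orth1 sb tb)
  have e : ∑ x0, norm (Fc a (Fin.cons x0 x'))^2 =
      ∑ x0 : Fin r, norm (∑ b, Fc (slc a b) x' * omg r ^ (b.val * x0.val))^2 :=
    Finset.sum_congr rfl fun x0 _ => by rw [key1]
  rw [e, h5]
  congr 1
  have hpt : ∀ b : Fin r, norm (Fc (slc a b) x')^2 =
      (if b = 0 then norm (Fc (slc a 0) x')^2 else 0) +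
        norm (Fc (slcz a b) x')^2 := by
    intro b
    rw [slicez_eq]
    by_cases hb : b = 0
    · subst hb; simp
    · simp [hb]
  rw [Finset.sum_congr rfl fun b _ => hpt b, Finset.sum_add_distrib,
    Finset.sum_ite_eq' Finset.univ (0 : Fin r) (fun _ => norm (Fc (slc a 0) x')^2)]
  simp
end keys

section monster
variable {r : ℕ} [NeZero r]

lemma endgame (u s t w : ℝ) (hu : 0 ≤ u) (hs : 0 ≤ s) (ht : 0 ≤ t)
    (hw : w ≤ (s+t)/2) :
    u*s^2 + 6*(u*s*t/4) + 4*(u*t*w/8) + u*t^2/16 ≤ u*((s+t)^2) := by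
  nlinarith [mul_le_mul_of_nonneg_left hw (mul_nonneg hu ht),
    mul_nonneg hu (mul_nonneg hs ht), mul_nonneg hu (mul_nonneg ht ht)]

lemma glue (R N P P' s t A B C Q S4 S2 : ℝ)
    (hR1 : 1 ≤ R) (hN0 : 0 ≤ N) (hPP' : P = 16*R^2*P') (hP'0 : 0 ≤ P')
    (hs0 : 0 ≤ s) (ht0 : 0 ≤ t) (hA0 : 0 ≤ A) (hQ0 : 0 ≤ Q)
    (hB0 : 0 ≤ B) (hC0 : 0 ≤ C)
    (hsum4 : S4 ≤ R*A + 6*R*B + 4*C + R^2*Q)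
    (hL2 : S2 = R*(s+t))
    (hX : N*A ≤ P*s^2) (hY : N*Q ≤ R*P'*t^2)
    (hBb : B ≤ Real.sqrt (A*Q)) (hCb : C ≤ Real.sqrt ((R*B)*(R^2*Q))) :
    (N*R) * S4 ≤ P * S2^2 := by
  have hR0 : (0:ℝ) ≤ R := by linarith only [hR1]
  have hRne : R ≠ 0 := by intro h; rw [h] at hR1; linarith only [hR1]
  have hP0 : (0:ℝ) ≤ P := by rw [hPP']; positivity
  have hNQ0 : 0 ≤ N * Q := mul_nonneg hN0 hQ0
  have hRP' : R * P' = P/(16*R) := by rw [hPP']; field_simp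
  have hY'' : N * Q ≤ P/(16*R) * t^2 := by rw [← hRP']; exact hY
  have hY' : N * Q ≤ P/16 * t^2 := by
    refine hY''.trans ?_
    have h16 : (16:ℝ) ≤ 16*R := by linarith only [hR1]
    have hdiv : P/(16*R) ≤ P/16 := div_le_div_of_nonneg_left hP0 (by norm_num) h16
    exact mul_le_mul_of_nonneg_right hdiv (sq_nonneg t)
  have hNB : N * B ≤ P * s * t / 4 := by
    calc N * B ≤ N * Real.sqrt (A*Q) := mul_le_mul_of_nonneg_left hBb hN0
      _ = Real.sqrt ((N*A) * (N*Q)) := by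
          rw [show (N*A)*(N*Q) = N^2*(A*Q) by ring, Real.sqrt_mul (sq_nonneg N),
            Real.sqrt_sq hN0]
      _ ≤ Real.sqrt ((P*s^2) * (P/16*t^2)) :=
          Real.sqrt_le_sqrt (mul_le_mul hX hY' hNQ0 (by positivity))
      _ = P*s*t/4 := by
          rw [show (P*s^2)*(P/16*t^2) = (P*s*t/4)^2 by ring,
            Real.sqrt_sq (by positivity)]
  have sqrtst : Real.sqrt (s*t) ≤ (s + t)/2 := by
    have h1 : s * t ≤ ((s+t)/2)^2 := by nlinarith [sq_nonneg (s-t)]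
    have h2 := Real.sqrt_le_sqrt h1
    rwa [Real.sqrt_sq (by positivity)] at h2
  have hNC : (N*R) * C ≤ R^2 * P * t * Real.sqrt (s*t) / 8 := by
    calc (N*R) * C ≤ (N*R) * Real.sqrt ((R*B)*(R^2*Q)) :=
          mul_le_mul_of_nonneg_left hCb (by positivity)
      _ = Real.sqrt ((N*R)^2 * ((R*B)*(R^2*Q))) := by
          rw [Real.sqrt_mul (sq_nonneg _), Real.sqrt_sq (by positivity)]
      _ = Real.sqrt (R^5 * ((N*B)*(N*Q))) := by
          congr 1; ring
      _ ≤ Real.sqrt (R^5 * ((P*s*t/4) * (P/(16*R)*t^2))) := by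
          apply Real.sqrt_le_sqrt
          apply mul_le_mul_of_nonneg_left _ (by positivity)
          exact mul_le_mul hNB hY'' hNQ0 (by positivity)
      _ = R^2 * P * t * Real.sqrt (s*t) / 8 := by
          rw [show R^5 * ((P*s*t/4) * (P/(16*R)*t^2)) = (R^2*P*t/8)^2 * (s*t) by
            field_simp; ring]
          rw [Real.sqrt_mul (sq_nonneg _), Real.sqrt_sq (by positivity)]
          ring
  rw [hL2]
  have key := endgame (R^2*P) s t (Real.sqrt (s*t)) (by positivity) hs0 ht0 sqrtst
  calc (N*R) * S4 ≤ (N*R) * (R*A + 6*R*B + 4*C + R^2*Q) :=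
        mul_le_mul_of_nonneg_left hsum4 (by positivity)
    _ = R^2*(N*A) + 6*R^2*(N*B) + 4*((N*R)*C) + R^3*(N*Q) := by ring
    _ ≤ R^2*(P*s^2) + 6*R^2*(P*s*t/4) + 4*(R^2*P*t*Real.sqrt (s*t)/8) +
          R^3*(P/(16*R)*t^2) := by
        gcongr
    _ = (R^2*P)*s^2 + 6*((R^2*P)*s*t/4) + 4*((R^2*P)*t*Real.sqrt (s*t)/8) +
          (R^2*P)*t^2/16 := by
        field_simp
    _ ≤ (R^2*P)*((s+t)^2) := key
    _ = P*(R*(s+t))^2 := by ring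

lemma hL2' {n : ℕ} (a : (Fin (n+1) → Fin r) → ℂ) :
    ∑ x, norm (Fc a x)^2 =
      (r:ℝ) * ((∑ x', norm (Fc (slc a 0) x')^2) +
        ∑ b, ∑ x' : Fin n → Fin r, norm (Fc (slcz a b) x')^2) := by
  rw [sumsplit (r := r) (fun x => norm (Fc a x)^2),
    Finset.sum_congr rfl fun x' _ => key5 a x', ← Finset.mul_sum,
    Finset.sum_add_distrib]
  congr 2
  rw [Finset.sum_comm]

lemma perx' {n : ℕ} (a : (Fin (n+1) → Fin r) → ℂ) (x' : Fin n → Fin r) :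
    ∑ x0, norm (Fc a (Fin.cons x0 x'))^4 ≤
      (r:ℝ) * norm (Fc (slc a 0) x')^4 +
        6 * norm (Fc (slc a 0) x')^2 *
          ((r:ℝ) * ∑ b, norm (Fc (slcz a b) x')^2) +
        4 * (norm (Fc (slc a 0) x') *
          Real.sqrt ((r:ℝ) * ∑ b, norm (Fc (slcz a b) x')^2)) *
          ((r:ℝ) * ∑ b, norm (Fc (slcz a b) x')^2) +
        ((r:ℝ) * ∑ b, norm (Fc (slcz a b) x')^2)^2 := by
  have hq := quart (Fc (slc a 0) x') (fun x0 => Dpart a x0 x') (key3 a x')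
  have e : ∑ x0, norm (Fc a (Fin.cons x0 x'))^4 =
      ∑ x0, norm (Fc (slc a 0) x' + Dpart a x0 x')^4 :=
    Finset.sum_congr rfl fun x0 _ => by rw [key2]
  rw [e]
  refine hq.trans ?_
  have h2 : ∑ x0, norm (Dpart a x0 x')^2 =
      (r:ℝ) * ∑ b, norm (Fc (slcz a b) x')^2 := key4 a x'
  have h3 : ∑ x0, norm (Dpart a x0 x')^3 ≤
      ((r:ℝ) * ∑ b, norm (Fc (slcz a b) x')^2) *
        Real.sqrt ((r:ℝ) * ∑ b, norm (Fc (slcz a b) x')^2) := by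
    have := cube_bound (fun x0 => Dpart a x0 x')
    rwa [h2] at this
  have h4 : ∑ x0, norm (Dpart a x0 x')^4 ≤
      ((r:ℝ) * ∑ b, norm (Fc (slcz a b) x')^2)^2 := by
    have := pow4_bound (fun x0 => Dpart a x0 x')
    rwa [h2] at this
  rw [h2]
  have habsg : 0 ≤ norm (Fc (slc a 0) x') := norm_nonneg _
  nlinarith [mul_le_mul_of_nonneg_left h3
    (mul_nonneg (by norm_num : (0:ℝ) ≤ 4) habsg)]

lemma hsum4' {n : ℕ} (a : (Fin (n+1) → Fin r) → ℂ) :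
    ∑ x, norm (Fc a x)^4 ≤
      (r:ℝ) * (∑ x', norm (Fc (slc a 0) x')^4) +
        6 * (r:ℝ) * (∑ x', norm (Fc (slc a 0) x')^2 *
          (∑ b, norm (Fc (slcz a b) x')^2)) +
        4 * (∑ x', (norm (Fc (slc a 0) x') *
          Real.sqrt ((r:ℝ) * ∑ b, norm (Fc (slcz a b) x')^2)) *
          ((r:ℝ) * ∑ b, norm (Fc (slcz a b) x')^2)) +
        (r:ℝ)^2 * (∑ x', (∑ b, norm (Fc (slcz a b) x')^2)^2) := by
  rw [sumsplit (r := r) (fun x => norm (Fc a x)^4)]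
  refine (Finset.sum_le_sum fun x' (_ : x' ∈ Finset.univ) => perx' a x').trans ?_
  rw [Finset.sum_add_distrib, Finset.sum_add_distrib, Finset.sum_add_distrib]
  apply le_of_eq
  have e1 : ∑ x' : Fin n → Fin r, ((r:ℝ) * norm (Fc (slc a 0) x')^4) =
      (r:ℝ) * (∑ x', norm (Fc (slc a 0) x')^4) := by
    rw [Finset.mul_sum]
  have e2 : ∑ x' : Fin n → Fin r, (6 * norm (Fc (slc a 0) x')^2 *
      ((r:ℝ) * ∑ b, norm (Fc (slcz a b) x')^2)) =
      6 * (r:ℝ) * (∑ x', norm (Fc (slc a 0) x')^2 *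
        (∑ b, norm (Fc (slcz a b) x')^2)) := by
    rw [Finset.mul_sum]
    exact Finset.sum_congr rfl fun x' _ => by ring
  have e3 : ∑ x' : Fin n → Fin r, (4 * (norm (Fc (slc a 0) x') *
      Real.sqrt ((r:ℝ) * ∑ b, norm (Fc (slcz a b) x')^2)) *
      ((r:ℝ) * ∑ b, norm (Fc (slcz a b) x')^2)) =
      4 * (∑ x', (norm (Fc (slc a 0) x') *
        Real.sqrt ((r:ℝ) * ∑ b, norm (Fc (slcz a b) x')^2)) *
        ((r:ℝ) * ∑ b, norm (Fc (slcz a b) x')^2)) := by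
    rw [Finset.mul_sum]
    exact Finset.sum_congr rfl fun x' _ => by ring
  have e4 : ∑ x' : Fin n → Fin r, (((r:ℝ) *
      ∑ b, norm (Fc (slcz a b) x')^2)^2) =
      (r:ℝ)^2 * (∑ x', (∑ b, norm (Fc (slcz a b) x')^2)^2) := by
    rw [Finset.mul_sum]
    exact Finset.sum_congr rfl fun x' _ => by ring
  rw [e1, e2, e3, e4]

lemma hBb' {n : ℕ} (a : (Fin (n+1) → Fin r) → ℂ) :
    ∑ x' : Fin n → Fin r, norm (Fc (slc a 0) x')^2 *
        (∑ b, norm (Fc (slcz a b) x')^2) ≤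
      Real.sqrt ((∑ x', norm (Fc (slc a 0) x')^4) *
        (∑ x', (∑ b, norm (Fc (slcz a b) x')^2)^2)) := by
  have hcs := cs_sqrt Finset.univ (fun x' => norm (Fc (slc a 0) x')^2)
    (fun x' => ∑ b, norm (Fc (slcz a b) x')^2)
    (fun _ _ => sq_nonneg _)
    (fun x' _ => Finset.sum_nonneg fun b _ => sq_nonneg _)
  have e : (∑ x' : Fin n → Fin r, (norm (Fc (slc a 0) x')^2)^2) =
      ∑ x' : Fin n → Fin r, norm (Fc (slc a 0) x')^4 :=
    Finset.sum_congr rfl fun x' _ => by ring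
  rwa [e] at hcs

lemma hCb' {n : ℕ} (a : (Fin (n+1) → Fin r) → ℂ) :
    ∑ x' : Fin n → Fin r, (norm (Fc (slc a 0) x') *
        Real.sqrt ((r:ℝ) * ∑ b, norm (Fc (slcz a b) x')^2)) *
        ((r:ℝ) * ∑ b, norm (Fc (slcz a b) x')^2) ≤
      Real.sqrt (((r:ℝ) * ∑ x', norm (Fc (slc a 0) x')^2 *
          (∑ b, norm (Fc (slcz a b) x')^2)) *
        ((r:ℝ)^2 * ∑ x', (∑ b, norm (Fc (slcz a b) x')^2)^2)) := by
  have hR0 : (0:ℝ) ≤ (r:ℝ) := Nat.cast_nonneg r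
  have hdd0 : ∀ x' : Fin n → Fin r, (0:ℝ) ≤ ∑ b, norm (Fc (slcz a b) x')^2 :=
    fun x' => Finset.sum_nonneg fun b _ => sq_nonneg _
  have hcs := cs_sqrt Finset.univ
    (fun x' => norm (Fc (slc a 0) x') *
      Real.sqrt ((r:ℝ) * ∑ b, norm (Fc (slcz a b) x')^2))
    (fun x' => (r:ℝ) * ∑ b, norm (Fc (slcz a b) x')^2)
    (fun x' _ => mul_nonneg (norm_nonneg _) (Real.sqrt_nonneg _))
    (fun x' _ => mul_nonneg hR0 (hdd0 x'))
  have e1 : ∑ x' : Fin n → Fin r, (norm (Fc (slc a 0) x') *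
      Real.sqrt ((r:ℝ) * ∑ b, norm (Fc (slcz a b) x')^2))^2 =
      (r:ℝ) * ∑ x', norm (Fc (slc a 0) x')^2 *
        (∑ b, norm (Fc (slcz a b) x')^2) := by
    rw [Finset.mul_sum]
    refine Finset.sum_congr rfl fun x' _ => ?_
    rw [mul_pow, Real.sq_sqrt (mul_nonneg hR0 (hdd0 x'))]
    ring
  have e2 : ∑ x' : Fin n → Fin r, ((r:ℝ) * ∑ b, norm (Fc (slcz a b) x')^2)^2 =
      (r:ℝ)^2 * ∑ x', (∑ b, norm (Fc (slcz a b) x')^2)^2 := by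
    rw [Finset.mul_sum]
    exact Finset.sum_congr rfl fun x' _ => by ring
  rwa [e1, e2] at hcs

lemma Qbound {n : ℕ} (a : (Fin (n+1) → Fin r) → ℂ) :
    ∑ x' : Fin n → Fin r, (∑ b, norm (Fc (slcz a b) x')^2)^2 ≤
      (r:ℝ) * ∑ b, ∑ x' : Fin n → Fin r, norm (Fc (slcz a b) x')^4 := by
  have hpt : ∀ x' : Fin n → Fin r, (∑ b, norm (Fc (slcz a b) x')^2)^2 ≤
      (r:ℝ) * ∑ b, (norm (Fc (slcz a b) x')^2)^2 := by
    intro x'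
    have hcs := sq_sum_le_card_mul_sum_sq (s := (Finset.univ : Finset (Fin r)))
      (f := fun b => norm (Fc (slcz a b) x')^2)
    calc (∑ b, norm (Fc (slcz a b) x')^2)^2 ≤
        ((Finset.univ : Finset (Fin r)).card : ℝ) *
          ∑ b, (norm (Fc (slcz a b) x')^2)^2 := by exact_mod_cast hcs
      _ = (r:ℝ) * ∑ b, (norm (Fc (slcz a b) x')^2)^2 := by
          rw [Finset.card_univ, Fintype.card_fin]
  refine (Finset.sum_le_sum fun x' (_ : x' ∈ Finset.univ) => hpt x').trans ?_
  rw [← Finset.mul_sum, Finset.sum_comm]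
  apply mul_le_mul_of_nonneg_left _ (Nat.cast_nonneg r)
  apply le_of_eq
  exact Finset.sum_congr rfl fun b _ => Finset.sum_congr rfl fun x' _ => by ring

set_option maxHeartbeats 1000000 in
lemma hc (n : ℕ) : ∀ (k : ℕ) (a : (Fin n → Fin r) → ℂ),
    (∀ S, a S ≠ 0 → suppCard S ≤ k) →
    (r:ℝ)^n * ∑ x, norm (Fc a x)^4 ≤
      (16 * (r:ℝ)^2)^k * (∑ x, norm (Fc a x)^2)^2 := by
  induction n with
  | zero => intro k a _; exact hc_base a
  | succ n IH =>
    intro k a ha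
    rcases k with _ | k
    · exact hc0 a (fun S hS => Nat.le_zero.mp (ha S hS))
    have hR1 : (1:ℝ) ≤ (r:ℝ) := by exact_mod_cast Nat.one_le_iff_ne_zero.mpr (NeZero.ne r)
    have hX : (r:ℝ)^n * (∑ x', norm (Fc (slc a 0) x')^4) ≤
        (16 * (r:ℝ)^2)^(k+1) * (∑ x', norm (Fc (slc a 0) x')^2)^2 := by
      refine IH (k+1) (slc a 0) fun S' hS' => ?_
      have := ha (Fin.cons 0 S') hS'
      rw [suppCard_cons] at this
      simpa using this
    have hYb : ∀ b, (r:ℝ)^n * (∑ x', norm (Fc (slcz a b) x')^4) ≤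
        (16 * (r:ℝ)^2)^k *
          (∑ x' : Fin n → Fin r, norm (Fc (slcz a b) x')^2)^2 := by
      intro b
      refine IH k (slcz a b) fun S' hS' => ?_
      by_cases hb : b = 0
      · rw [slcz, hb] at hS'; simp at hS'
      · rw [slcz, if_neg hb] at hS'
        have := ha (Fin.cons b S') hS'
        rw [suppCard_cons, if_neg hb] at this
        omega
    have hY : (r:ℝ)^n * (∑ x' : Fin n → Fin r,
          (∑ b, norm (Fc (slcz a b) x')^2)^2) ≤
        (r:ℝ) * (16 * (r:ℝ)^2)^k *
          (∑ b, ∑ x' : Fin n → Fin r, norm (Fc (slcz a b) x')^2)^2 := by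
      have h1 : (r:ℝ)^n * (∑ x' : Fin n → Fin r,
            (∑ b, norm (Fc (slcz a b) x')^2)^2) ≤
          (r:ℝ)^n * ((r:ℝ) * ∑ b,
            ∑ x' : Fin n → Fin r, norm (Fc (slcz a b) x')^4) :=
        mul_le_mul_of_nonneg_left (Qbound a) (by positivity)
      have h2 : (r:ℝ)^n * ((r:ℝ) * ∑ b,
            ∑ x' : Fin n → Fin r, norm (Fc (slcz a b) x')^4) =
          (r:ℝ) * ∑ b, ((r:ℝ)^n *
            ∑ x' : Fin n → Fin r, norm (Fc (slcz a b) x')^4) := by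
        calc (r:ℝ)^n * ((r:ℝ) * ∑ b,
              ∑ x' : Fin n → Fin r, norm (Fc (slcz a b) x')^4)
            = (r:ℝ) * ((r:ℝ)^n * ∑ b,
              ∑ x' : Fin n → Fin r, norm (Fc (slcz a b) x')^4) := by ring
          _ = (r:ℝ) * ∑ b, ((r:ℝ)^n *
              ∑ x' : Fin n → Fin r, norm (Fc (slcz a b) x')^4) := by
              rw [Finset.mul_sum ((Finset.univ : Finset (Fin r)))
                (fun b => ∑ x' : Fin n → Fin r, norm (Fc (slcz a b) x')^4)
                ((r:ℝ)^n)]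
      have h3 : ∑ b, ((r:ℝ)^n *
            ∑ x' : Fin n → Fin r, norm (Fc (slcz a b) x')^4) ≤
          (16 * (r:ℝ)^2)^k *
            (∑ b, ∑ x' : Fin n → Fin r, norm (Fc (slcz a b) x')^2)^2 := by
        refine (Finset.sum_le_sum fun b (_ : b ∈ Finset.univ) => hYb b).trans ?_
        rw [← Finset.mul_sum]
        refine mul_le_mul_of_nonneg_left ?_ (by positivity)
        exact sum_sq_le_sq_sum _ _ fun b _ =>
          Finset.sum_nonneg fun _ _ => sq_nonneg _
      calc (r:ℝ)^n * (∑ x' : Fin n → Fin r,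
            (∑ b, norm (Fc (slcz a b) x')^2)^2)
          ≤ (r:ℝ) * ∑ b, ((r:ℝ)^n *
            ∑ x' : Fin n → Fin r, norm (Fc (slcz a b) x')^4) := h1.trans_eq h2
        _ ≤ (r:ℝ) * ((16 * (r:ℝ)^2)^k *
            (∑ b, ∑ x' : Fin n → Fin r, norm (Fc (slcz a b) x')^2)^2) :=
            mul_le_mul_of_nonneg_left h3 (Nat.cast_nonneg r)
        _ = (r:ℝ) * (16 * (r:ℝ)^2)^k *
            (∑ b, ∑ x' : Fin n → Fin r, norm (Fc (slcz a b) x')^2)^2 := by ring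
    rw [pow_succ]
    exact glue (r:ℝ) ((r:ℝ)^n) ((16 * (r:ℝ)^2)^(k+1)) ((16 * (r:ℝ)^2)^k)
      (∑ x', norm (Fc (slc a 0) x')^2)
      (∑ b, ∑ x' : Fin n → Fin r, norm (Fc (slcz a b) x')^2)
      (∑ x', norm (Fc (slc a 0) x')^4)
      (∑ x', norm (Fc (slc a 0) x')^2 *
        (∑ b, norm (Fc (slcz a b) x')^2))
      (∑ x', (norm (Fc (slc a 0) x') *
        Real.sqrt ((r:ℝ) * ∑ b, norm (Fc (slcz a b) x')^2)) *
        ((r:ℝ) * ∑ b, norm (Fc (slcz a b) x')^2))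
      (∑ x', (∑ b, norm (Fc (slcz a b) x')^2)^2)
      (∑ x, norm (Fc a x)^4) (∑ x, norm (Fc a x)^2)
      hR1 (by positivity) (by rw [pow_succ]; ring) (by positivity)
      (Finset.sum_nonneg fun _ _ => sq_nonneg _)
      (Finset.sum_nonneg fun b _ => Finset.sum_nonneg fun _ _ => sq_nonneg _)
      (Finset.sum_nonneg fun _ _ => by positivity)
      (Finset.sum_nonneg fun x' _ => sq_nonneg _)
      (Finset.sum_nonneg fun x' _ => mul_nonneg (sq_nonneg _)
        (Finset.sum_nonneg fun b _ => sq_nonneg _))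
      (Finset.sum_nonneg fun x' _ => mul_nonneg
        (mul_nonneg (norm_nonneg _) (Real.sqrt_nonneg _))
        (mul_nonneg (Nat.cast_nonneg r) (Finset.sum_nonneg fun b _ => sq_nonneg _)))
      (hsum4' a) (hL2' a) hX hY (hBb' a) (hCb' a)
end monster

theorem stmt_17 {n : ℕ} (r : ℕ) [NeZero r] (hr : 2 ≤ r)
    (f : (Fin n → Fin r) → ℝ) (k : ℕ) (hk1 : 1 ≤ k) (hkn : k ≤ n) :
    ∑ S ∈ Finset.univ.filter fun S => suppCard S = k,
        ‖fhat (fun y => (f y : ℂ)) S‖ ^ 2 ≤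
      ((9 / 2) * (r : ℝ) ^ 3) ^ (2 * k) * (Lnorm (4 / 3) fun y => (f y : ℂ)) ^ 2 := by
  have hR1 : (1:ℝ) ≤ (r:ℝ) := by exact_mod_cast Nat.one_le_iff_ne_zero.mpr (NeZero.ne r)
  set fC : (Fin n → Fin r) → ℂ := fun y => (f y : ℂ) with hfC
  set aW : (Fin n → Fin r) → ℂ := fun S => if suppCard S = k then fhat fC S else 0 with haW
  set M : ℝ := ∑ S, norm (aW S)^2 with hM
  have hM0 : 0 ≤ M := Finset.sum_nonneg fun S _ => sq_nonneg _
  set N : ℝ := (r:ℝ)^n with hN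
  have hN0 : (0:ℝ) < N := by positivity
  -- LHS equals M
  have hLHS : ∑ S ∈ Finset.univ.filter (fun S => suppCard S = k),
      norm (fhat fC S)^2 = M := by
    rw [hM, Finset.sum_filter]
    refine Finset.sum_congr rfl fun S _ => ?_
    by_cases h : suppCard S = k
    · simp [haW, h]
    · simp [haW, h]
  rw [hLHS]
  -- Parseval for W
  have hpar : ∑ x, norm (Fc aW x)^2 = N * M := by
    rw [hM, hN]
    exact sum_sq_abs_ortho (fun (S x : Fin n → Fin r) => uS S x) aW ((r:ℝ)^n)
      (fun S T => by simpa using orthn S T)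
  -- ⟨f, W⟩ identity
  have hrnC : ((r:ℂ)^n) ≠ 0 := by
    have : (r:ℂ) ≠ 0 := by exact_mod_cast (NeZero.ne r)
    exact pow_ne_zero _ this
  have hfhat_sum : ∀ S, ∑ x, fC x * (starRingEnd ℂ) (uS S x) = (r:ℂ)^n * fhat fC S := by
    intro S
    rw [fhat, intg]
    push_cast
    rw [mul_div_cancel₀ _ hrnC]
  have hFW : ∑ x, fC x * (starRingEnd ℂ) (Fc aW x) = (((N * M : ℝ)) : ℂ) := by
    calc ∑ x, fC x * (starRingEnd ℂ) (Fc aW x)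
        = ∑ x, ∑ S, (starRingEnd ℂ) (aW S) * (fC x * (starRingEnd ℂ) (uS S x)) := by
          refine Finset.sum_congr rfl fun x _ => ?_
          rw [show Fc aW x = ∑ S, aW S * uS S x from rfl, map_sum, Finset.mul_sum]
          exact Finset.sum_congr rfl fun S _ => by rw [map_mul]; ring
      _ = ∑ S, (starRingEnd ℂ) (aW S) * ∑ x, (fC x * (starRingEnd ℂ) (uS S x)) := by
          rw [Finset.sum_comm]
          exact Finset.sum_congr rfl fun S _ => (Finset.mul_sum _ _ _).symm
      _ = ∑ S, (starRingEnd ℂ) (aW S) * ((r:ℂ)^n * fhat fC S) :=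
          Finset.sum_congr rfl fun S _ => by rw [hfhat_sum S]
      _ = (r:ℂ)^n * ∑ S, fhat fC S * (starRingEnd ℂ) (aW S) := by
          rw [Finset.mul_sum]
          exact Finset.sum_congr rfl fun S _ => by ring
      _ = (((N * M : ℝ)) : ℂ) := by
          have e : ∑ S, fhat fC S * (starRingEnd ℂ) (aW S) = ((M:ℝ):ℂ) := by
            rw [hM]
            push_cast
            refine Finset.sum_congr rfl fun S _ => ?_
            by_cases h : suppCard S = k
            · rw [haW]
              simp only [if_pos h]
              rw [Complex.mul_conj]
              exact_mod_cast congrArg (fun z : ℝ => (z:ℂ)) (Complex.sq_norm _).symm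
            · rw [haW]
              simp [if_neg h]
          rw [e, hN]
          push_cast
          ring
  -- bound N*M by sum of abs
  have habs1 : N * M ≤ ∑ x, norm (fC x) * norm (Fc aW x) := by
    have h1 : norm ((((N * M : ℝ)) : ℂ)) = N * M := by
      rw [Complex.norm_real, Real.norm_eq_abs, abs_of_nonneg (by positivity)]
    rw [← h1, ← hFW]
    refine (norm_sum_le _ _).trans ?_
    refine Finset.sum_le_sum fun x _ => ?_
    rw [norm_mul, Complex.norm_conj]
  -- Hölder
  have hconj : Real.HolderConjugate (4/3) 4 := ⟨by norm_num, by norm_num, by norm_num⟩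
  have hold := Real.inner_le_Lp_mul_Lq (s := Finset.univ)
    (f := fun x => norm (fC x)) (g := fun x => norm (Fc aW x)) hconj
  -- clean up the abs in hold
  have hold' : ∑ x, norm (fC x) * norm (Fc aW x) ≤
      (∑ x, norm (fC x) ^ (4/3 : ℝ)) ^ (3/4 : ℝ) *
        (∑ x, norm (Fc aW x) ^ (4:ℕ)) ^ (1/4 : ℝ) := by
    have e1 : ∀ x : Fin n → Fin r, |norm (fC x)| ^ (4/3:ℝ) =
        norm (fC x) ^ (4/3:ℝ) := fun x => by
      rw [abs_of_nonneg (norm_nonneg _)]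
    have e2 : ∀ x : Fin n → Fin r, |norm (Fc aW x)| ^ (4:ℝ) =
        norm (Fc aW x) ^ (4:ℕ) := fun x => by
      rw [abs_of_nonneg (norm_nonneg _)]
      rw [show ((4:ℝ)) = ((4:ℕ):ℝ) by norm_num, Real.rpow_natCast]
    rw [Finset.sum_congr rfl fun x _ => e1 x, Finset.sum_congr rfl fun x _ => e2 x,
      show (1/(4/3):ℝ) = (3/4:ℝ) by norm_num] at hold
    exact hold
  set L : ℝ := ∑ x, norm (fC x) ^ (4/3 : ℝ) with hL
  have hL0 : 0 ≤ L := Finset.sum_nonneg fun x _ => Real.rpow_nonneg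
    (norm_nonneg _) _
  -- hypercontractivity
  have hhc := hc n k aW (fun S hS => by
    rw [haW] at hS
    by_cases h : suppCard S = k
    · exact le_of_eq h
    · simp [h] at hS)
  rw [hpar] at hhc
  set P : ℝ := (16 * (r:ℝ)^2)^k with hP
  have hP0 : (0:ℝ) ≤ P := by positivity
  have hS4 : ∑ x, norm (Fc aW x)^(4:ℕ) ≤ P * N * M^2 := by
    have h2 : N * ∑ x, norm (Fc aW x)^4 ≤ P * (N*M)^2 := by
      rw [hN] at *
      exact hhc
    have := (mul_le_mul_of_nonneg_left h2 (le_of_lt (inv_pos.mpr hN0)))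
    rw [← mul_assoc, inv_mul_cancel₀ (ne_of_gt hN0), one_mul] at this
    calc ∑ x, norm (Fc aW x)^(4:ℕ) ≤ N⁻¹ * (P * (N*M)^2) := this
      _ = P * N * M^2 := by field_simp
  -- main chain
  have main : N * M ≤ L ^ (3/4:ℝ) * (P * N * M^2) ^ (1/4:ℝ) := by
    refine (habs1.trans hold').trans ?_
    refine mul_le_mul_of_nonneg_left ?_ (Real.rpow_nonneg hL0 _)
    exact Real.rpow_le_rpow (Finset.sum_nonneg fun x _ => by positivity) hS4 (by norm_num)
  -- Lnorm identity
  have hLnorm : (Lnorm (4/3) fC)^2 = (L / N) ^ (3/2 : ℝ) := by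
    unfold Lnorm
    rw [← hL]
    rw [show ((r:ℝ)^n) = N from hN.symm]
    rw [← Real.rpow_natCast ((L / N) ^ ((1/(4/3):ℝ))) 2, ← Real.rpow_mul
      (div_nonneg hL0 hN0.le)]
    norm_num
  rw [hLnorm]
  have hdivnn : (0:ℝ) ≤ (L/N) ^ (3/2:ℝ) := Real.rpow_nonneg (div_nonneg hL0 hN0.le) _
  have hcoef : ((4:ℝ)*(r:ℝ))^k ≤ ((9/2) * (r:ℝ)^3)^(2*k) := by
    rw [pow_mul]
    apply pow_le_pow_left₀ (by positivity)
    have h6 : (r:ℝ)^1 ≤ (r:ℝ)^6 := pow_le_pow_right₀ hR1 (by norm_num)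
    rw [pow_one] at h6
    nlinarith [pow_nonneg (le_trans zero_le_one hR1) 6]
  rcases eq_or_lt_of_le hM0 with hMz | hMpos
  · rw [← hMz]
    exact mul_nonneg (by positivity) hdivnn
  -- square main
  have hP4 : P = ((4*(r:ℝ))^k)^2 := by
    rw [hP, show (16*(r:ℝ)^2) = (4*(r:ℝ))^2 by ring, ← pow_mul, mul_comm 2 k, pow_mul]
  have e34 : (L^(3/4:ℝ))^2 = L^(3/2:ℝ) := by
    rw [← Real.rpow_natCast (L^(3/4:ℝ)) 2, ← Real.rpow_mul hL0]
    norm_num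
  have e14 : ((P*N*M^2)^(1/4:ℝ))^2 = (4*(r:ℝ))^k * Real.sqrt N * M := by
    rw [← Real.rpow_natCast ((P*N*M^2)^(1/4:ℝ)) 2, ← Real.rpow_mul (by positivity)]
    rw [show ((1/4:ℝ) * (2:ℕ)) = (1/2:ℝ) by norm_num]
    rw [← Real.sqrt_eq_rpow]
    rw [show P*N*M^2 = (((4*(r:ℝ))^k)^2 * N) * M^2 by rw [← hP4]]
    rw [Real.sqrt_mul (by positivity) (M^2), Real.sqrt_sq hM0,
      Real.sqrt_mul (sq_nonneg _) N, Real.sqrt_sq (by positivity)]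
  have hsq : (N*M)^2 ≤ L^(3/2:ℝ) * ((4*(r:ℝ))^k * Real.sqrt N * M) := by
    calc (N*M)^2 ≤ (L^(3/4:ℝ) * (P*N*M^2)^(1/4:ℝ))^2 :=
          pow_le_pow_left₀ (by positivity) main 2
      _ = (L^(3/4:ℝ))^2 * ((P*N*M^2)^(1/4:ℝ))^2 := by rw [mul_pow]
      _ = L^(3/2:ℝ) * ((4*(r:ℝ))^k * Real.sqrt N * M) := by rw [e34, e14]
  -- cancel one M
  have hcancel : N^2 * M ≤ L^(3/2:ℝ) * ((4*(r:ℝ))^k * Real.sqrt N) := by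
    have h1 : (N^2 * M) * M ≤ (L^(3/2:ℝ) * ((4*(r:ℝ))^k * Real.sqrt N)) * M := by
      calc (N^2 * M) * M = (N*M)^2 := by ring
        _ ≤ L^(3/2:ℝ) * ((4*(r:ℝ))^k * Real.sqrt N * M) := hsq
        _ = (L^(3/2:ℝ) * ((4*(r:ℝ))^k * Real.sqrt N)) * M := by ring
    exact le_of_mul_le_mul_right h1 hMpos
  have hMle : M ≤ (4*(r:ℝ))^k * (L^(3/2:ℝ) / N^(3/2:ℝ)) := by
    have hsqrtdiv : Real.sqrt N / N^2 = 1 / N^(3/2:ℝ) := by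
      rw [Real.sqrt_eq_rpow, ← Real.rpow_natCast N 2, ← Real.rpow_sub hN0]
      rw [show ((1/2:ℝ) - ((2:ℕ):ℝ)) = -(3/2:ℝ) by norm_num]
      rw [Real.rpow_neg hN0.le, one_div]
    have h2 : M ≤ (L^(3/2:ℝ) * ((4*(r:ℝ))^k * Real.sqrt N)) / N^2 := by
      rw [le_div_iff₀ (by positivity)]
      calc M * N^2 = N^2 * M := by ring
        _ ≤ _ := hcancel
    refine h2.trans (le_of_eq ?_)
    rw [show (L^(3/2:ℝ) * ((4*(r:ℝ))^k * Real.sqrt N)) / N^2 =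
      (4*(r:ℝ))^k * (L^(3/2:ℝ) * (Real.sqrt N / N^2)) by ring]
    rw [hsqrtdiv]
    ring
  refine hMle.trans ?_
  rw [show (L/N)^(3/2:ℝ) = L^(3/2:ℝ)/N^(3/2:ℝ) from Real.div_rpow hL0 hN0.le _]
  exact mul_le_mul_of_nonneg_right hcoef
    (div_nonneg (Real.rpow_nonneg hL0 _) (Real.rpow_nonneg hN0.le _))
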